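/- Let I be an interval partition with |I_n| ≥ 2^n for all n. Then the ideal I_poly(I) is σ-pseudobounded: I_poly(I) is a countable union of sets X_m such that every infinite subset of each X_m has a further infinite subset whose union belongs to I_poly(I). -/
import Mathlib


/-- The ideal `I_poly(I)` of an interval partition determined by `k`. -/
def IPoly (k : ℕ → ℕ) : Set (Set ℕ) :=
  {A | ∃ p : Polynomial ℤ,
      ∀ n : ℕ, ((Set.Ico (k n) (k (n + 1)) ∩ A).ncard : ℤ) ≤ p.eval (n : ℤ)}

/-- Every integer polynomial is dominated on `ℕ` by `m * (n+1)^m` for some `m`. -/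
lemma poly_dominated (p : Polynomial ℤ) :
    ∃ m : ℕ, ∀ n : ℕ, p.eval (n : ℤ) ≤ (m : ℤ) * ((n : ℤ) + 1) ^ m := by
  set d := p.natDegree with hd
  set C : ℕ := ∑ i ∈ Finset.range (d + 1), (p.coeff i).natAbs with hC
  refine ⟨d + C, fun n => ?_⟩
  have h1 : (0 : ℤ) ≤ (n : ℤ) := Int.natCast_nonneg n
  have h2 : (1 : ℤ) ≤ (n : ℤ) + 1 := by linarith
  rw [Polynomial.eval_eq_sum_range]
  calc ∑ i ∈ Finset.range (d + 1), p.coeff i * (n : ℤ) ^ i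
      ≤ ∑ i ∈ Finset.range (d + 1), ((p.coeff i).natAbs : ℤ) * ((n : ℤ) + 1) ^ d := by
        refine Finset.sum_le_sum fun i hi => ?_
        have hi' : i ≤ d := Nat.lt_succ_iff.mp (Finset.mem_range.mp hi)
        have hb : (n : ℤ) ^ i ≤ ((n : ℤ) + 1) ^ d := by
          calc (n : ℤ) ^ i ≤ ((n : ℤ) + 1) ^ i := pow_le_pow_left₀ h1 (by linarith) i
            _ ≤ ((n : ℤ) + 1) ^ d := pow_le_pow_right₀ h2 hi'
        calc p.coeff i * (n : ℤ) ^ i ≤ |p.coeff i| * (n : ℤ) ^ i :=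
              mul_le_mul_of_nonneg_right (le_abs_self _) (pow_nonneg h1 i)
          _ ≤ |p.coeff i| * ((n : ℤ) + 1) ^ d :=
              mul_le_mul_of_nonneg_left hb (abs_nonneg _)
          _ = ((p.coeff i).natAbs : ℤ) * ((n : ℤ) + 1) ^ d := by
              rw [Int.abs_eq_natAbs]
    _ = (C : ℤ) * ((n : ℤ) + 1) ^ d := by
        rw [hC]; push_cast; rw [Finset.sum_mul]
    _ ≤ ((d + C : ℕ) : ℤ) * ((n : ℤ) + 1) ^ (d + C) := by
        have hpow : ((n : ℤ) + 1) ^ d ≤ ((n : ℤ) + 1) ^ (d + C) :=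
          pow_le_pow_right₀ h2 (Nat.le_add_right d C)
        have hc : (C : ℤ) ≤ ((d + C : ℕ) : ℤ) := by push_cast; linarith [Int.natCast_nonneg d]
        exact mul_le_mul hc hpow (pow_nonneg (by linarith) d) (Int.natCast_nonneg _)

/-- `ncard` of a finite union is at most the sum of the `ncard`s. -/
lemma ncard_range_biUnion_le {α : Type*} (N : ℕ) (s : ℕ → Set α) :
    (⋃ t ∈ Finset.range N, s t).ncard ≤ ∑ t ∈ Finset.range N, (s t).ncard := by
  induction N with
  | zero => simp
  | succ N ih =>
    rw [Finset.range_add_one, Finset.set_biUnion_insert,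
      Finset.sum_insert Finset.notMem_range_self]
    exact (Set.ncard_union_le _ _).trans (add_le_add le_rfl ih)

/-- Choosing a strictly monotone selector through a sequence of infinite sets. -/
lemma exists_strictMono_mem (E : ℕ → Set ℕ) (hE : ∀ t, (E t).Infinite) :
    ∃ g : ℕ → ℕ, StrictMono g ∧ ∀ t, g t ∈ E t := by
  choose F hF1 hF2 using fun t (a : ℕ) => (hE t).exists_gt a
  refine ⟨fun t => Nat.rec ((hE 0).nonempty.choose) (fun t prev => F (t + 1) prev) t,
    strictMono_nat_of_lt_succ fun t => hF2 (t + 1) _, fun t => ?_⟩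
  cases t with
  | zero => exact (hE 0).nonempty.choose_spec
  | succ t => exact hF1 (t + 1) _

theorem iPoly_sigmaPseudobounded (k : ℕ → ℕ) (h0 : k 0 = 0) (hmono : StrictMono k)
    (hsize : ∀ n : ℕ, 2 ^ n ≤ k (n + 1) - k n) :
    ∃ X : ℕ → Set (Set ℕ), IPoly k = ⋃ m, X m ∧
      ∀ m, ∀ Y ⊆ X m, Y.Infinite →
        ∃ Z ⊆ Y, Z.Infinite ∧ ⋃₀ Z ∈ IPoly k := by
  -- the pieces
  refine ⟨fun m => {A | ∀ n : ℕ,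
    ((Set.Ico (k n) (k (n + 1)) ∩ A).ncard : ℤ) ≤ (m : ℤ) * ((n : ℤ) + 1) ^ m}, ?_, ?_⟩
  · ext A
    constructor
    · rintro ⟨p, hp⟩
      obtain ⟨m, hm⟩ := poly_dominated p
      exact Set.mem_iUnion.mpr ⟨m, fun n => (hp n).trans (hm n)⟩
    · rintro hA
      obtain ⟨m, hm⟩ := Set.mem_iUnion.mp hA
      refine ⟨Polynomial.C (m : ℤ) * (Polynomial.X + 1) ^ m, fun n => ?_⟩
      simpa using hm n
  · intro m Y hYX hY
    -- an injective enumeration of part of Y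
    set f : ℕ → Set ℕ := fun i => ((Set.Infinite.natEmbedding Y hY) i).1 with hf
    have hfinj : Function.Injective f :=
      fun i j h => (Set.Infinite.natEmbedding Y hY).injective (Subtype.val_injective h)
    have hfY : ∀ i, f i ∈ Y := fun i => ((Set.Infinite.natEmbedding Y hY) i).2
    -- an ultrafilter extending cofinite
    obtain ⟨U, hU⟩ := Ultrafilter.exists_le (Filter.cofinite : Filter ℕ)
    have hUinf : ∀ s ∈ U, s.Infinite := by
      intro s hs
      by_contra hfin
      rw [Set.not_infinite] at hfin
      have : sᶜ ∈ U := hU (by simpa [Filter.mem_cofinite] using hfin)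
      exact (Ultrafilter.compl_notMem_iff.mpr hs) this
    -- the ultrafilter limit set
    set L : Set ℕ := {x | {i | x ∈ f i} ∈ U} with hL
    -- agreement sets
    set E : ℕ → Set ℕ := fun t => {i | ∀ x < k t, (x ∈ f i ↔ x ∈ L)} with hE
    have hEU : ∀ t, E t ∈ U := by
      intro t
      have : E t = ⋂ x ∈ Finset.range (k t), {i | x ∈ f i ↔ x ∈ L} := by
        ext i
        simp [hE, Finset.mem_range]
      rw [this]
      refine (Filter.biInter_finset_mem _).mpr fun x _ => ?_
      by_cases hx : x ∈ L
      · exact Filter.mem_of_superset hx fun i hi => by simp [hi, hx]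
      · have hx' : {i | x ∈ f i}ᶜ ∈ U := Ultrafilter.compl_mem_iff_notMem.mpr hx
        exact Filter.mem_of_superset hx' fun i hi => by
          simp only [Set.mem_compl_iff, Set.mem_setOf_eq] at hi ⊢
          tauto
    obtain ⟨g, hg, hgE⟩ := exists_strictMono_mem E fun t => hUinf _ (hEU t)
    -- the subfamily
    refine ⟨f '' Set.range g, ?_, ?_, ?_⟩
    · rintro _ ⟨i, -, rfl⟩; exact hfY i
    · exact ((Set.infinite_range_of_injective hg.injective).image
        (hfinj.injOn)).mono (le_refl _)
    · -- the union is in IPoly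
      refine ⟨(Polynomial.X + 2) * (Polynomial.C (m : ℤ) * (Polynomial.X + 1) ^ m),
        fun n => ?_⟩
      have hIfin : (Set.Ico (k n) (k (n + 1))).Finite := Set.finite_Ico _ _
      -- key inclusion
      have hsub : Set.Ico (k n) (k (n + 1)) ∩ ⋃₀ (f '' Set.range g) ⊆
          ⋃ t ∈ Finset.range (n + 2), Set.Ico (k n) (k (n + 1)) ∩ f (g t) := by
        rintro x ⟨hxI, A, ⟨_, ⟨t, rfl⟩, rfl⟩, hxA⟩
        by_cases ht : t < n + 2
        · exact Set.mem_biUnion (Finset.mem_range.mpr ht) ⟨hxI, hxA⟩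
        · push_neg at ht
          have hxlt : x < k (n + 1) := hxI.2
          have hx1 : x ∈ L := by
            have := hgE t x (lt_of_lt_of_le hxlt (hmono.monotone (by omega)))
            exact this.mp hxA
          have hx2 : x ∈ f (g (n + 1)) :=
            (hgE (n + 1) x hxlt).mpr hx1
          exact Set.mem_biUnion (Finset.mem_range.mpr (by omega)) ⟨hxI, hx2⟩
      -- counting
      have hcount : ((Set.Ico (k n) (k (n + 1)) ∩ ⋃₀ (f '' Set.range g)).ncard : ℤ) ≤
          (n + 2 : ℤ) * ((m : ℤ) * ((n : ℤ) + 1) ^ m) := by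
        have hfin' : (⋃ t ∈ Finset.range (n + 2),
            Set.Ico (k n) (k (n + 1)) ∩ f (g t)).Finite :=
          Set.Finite.biUnion (Finset.range (n + 2)).finite_toSet
            fun t _ => hIfin.inter_of_left _
        have h1 : (Set.Ico (k n) (k (n + 1)) ∩ ⋃₀ (f '' Set.range g)).ncard ≤
            (⋃ t ∈ Finset.range (n + 2), Set.Ico (k n) (k (n + 1)) ∩ f (g t)).ncard :=
          Set.ncard_le_ncard hsub hfin'
        have h2 : ∀ t, ((Set.Ico (k n) (k (n + 1)) ∩ f (g t)).ncard : ℤ) ≤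
            (m : ℤ) * ((n : ℤ) + 1) ^ m := fun t => hYX (hfY (g t)) n
        -- bound the biUnion ncard by the sum
        have h3 : ((⋃ t ∈ Finset.range (n + 2),
            Set.Ico (k n) (k (n + 1)) ∩ f (g t)).ncard : ℤ) ≤
            ∑ t ∈ Finset.range (n + 2),
              ((Set.Ico (k n) (k (n + 1)) ∩ f (g t)).ncard : ℤ) := by
          have := ncard_range_biUnion_le (n + 2)
            (fun t => Set.Ico (k n) (k (n + 1)) ∩ f (g t))
          exact_mod_cast this
        calc ((Set.Ico (k n) (k (n + 1)) ∩ ⋃₀ (f '' Set.range g)).ncard : ℤ)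
            ≤ ((⋃ t ∈ Finset.range (n + 2),
              Set.Ico (k n) (k (n + 1)) ∩ f (g t)).ncard : ℤ) := by exact_mod_cast h1
          _ ≤ ∑ t ∈ Finset.range (n + 2),
              ((Set.Ico (k n) (k (n + 1)) ∩ f (g t)).ncard : ℤ) := h3
          _ ≤ ∑ t ∈ Finset.range (n + 2), (m : ℤ) * ((n : ℤ) + 1) ^ m :=
              Finset.sum_le_sum fun t _ => h2 t
          _ = (n + 2 : ℤ) * ((m : ℤ) * ((n : ℤ) + 1) ^ m) := by
              rw [Finset.sum_const, Finset.card_range]; push_cast; ring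
      calc ((Set.Ico (k n) (k (n + 1)) ∩ ⋃₀ (f '' Set.range g)).ncard : ℤ)
          ≤ (n + 2 : ℤ) * ((m : ℤ) * ((n : ℤ) + 1) ^ m) := hcount
        _ = Polynomial.eval (n : ℤ)
            ((Polynomial.X + 2) * (Polynomial.C (m : ℤ) * (Polynomial.X + 1) ^ m)) := by
            simp
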